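/- Let p : X → Y be a regular overlay with X connected and Y a topological group. If there is an open neighborhood U of the identity of Y such that the family {U·y : y ∈ Y} is an overlay cover of Y for p, then there exists a topological group structure on X making p a continuous homomorphism. -/

import Mathlib

open Set Pointwise

set_option linter.unusedSectionVars false

/-- `p` restricts to a homeomorphism of `U ⊆ X` onto `V ⊆ Y`. -/
def RestrictsToHomeo {X Y : Type*} [TopologicalSpace X] [TopologicalSpace Y]
    (p : X → Y) (U : Set X) (V : Set Y) : Prop :=
  ∃ e : U ≃ₜ V, ∀ u : U, (e u : Y) = p u

/-- A **slice** of `p : X → Y`: an open set `U ⊆ X` such that `p ⁻¹' (p '' U)` is a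
disjoint union of open sets, one of which is `U`, each mapped by `p` homeomorphically
onto `p '' U`. -/
def IsSlice {X Y : Type*} [TopologicalSpace X] [TopologicalSpace Y]
    (p : X → Y) (U : Set X) : Prop :=
  IsOpen U ∧ ∃ D : Set (Set X), U ∈ D ∧ (∀ W ∈ D, IsOpen W) ∧
    D.PairwiseDisjoint id ∧ ⋃₀ D = p ⁻¹' (p '' U) ∧
    ∀ W ∈ D, RestrictsToHomeo p W (p '' U)

/-- A **covering structure** of `p : X → Y`: an open cover `S` of `X` by slices of `p`
such that for each `U ∈ S`, `p ⁻¹' (p '' U)` is a disjoint union of elements of `S`,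
each with image `p '' U`. -/
def IsCoveringStructure {X Y : Type*} [TopologicalSpace X] [TopologicalSpace Y]
    (p : X → Y) (S : Set (Set X)) : Prop :=
  (∀ U ∈ S, IsSlice p U) ∧ ⋃₀ S = Set.univ ∧
    ∀ U ∈ S, ∃ D ⊆ S, D.PairwiseDisjoint id ∧ ⋃₀ D = p ⁻¹' (p '' U) ∧
      ∀ W ∈ D, p '' W = p '' U

/-- The **star** of a point `x` with respect to a family `S` of subsets. -/
def st {X : Type*} (x : X) (S : Set (Set X)) : Set X := ⋃₀ {U | U ∈ S ∧ x ∈ U}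

/-- An **overlay structure** of `p : X → Y`: a covering structure `S` such that for every
`x ∈ X` the star `st x S` is a slice of `p`. -/
def IsOverlayStructure {X Y : Type*} [TopologicalSpace X] [TopologicalSpace Y]
    (p : X → Y) (S : Set (Set X)) : Prop :=
  IsCoveringStructure p S ∧ ∀ x : X, IsSlice p (st x S)

/-- `p` is an **overlay** if it admits an overlay structure. -/
def IsOverlay {X Y : Type*} [TopologicalSpace X] [TopologicalSpace Y]
    (p : X → Y) : Prop :=
  ∃ S : Set (Set X), IsOverlayStructure p S

/-- A `𝒰`-**chain**: a finite sequence of points such that each pair of consecutive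
points lies in a common element of `𝒰`. -/
def IsChainIn {Y : Type*} (𝒰 : Set (Set Y)) {n : ℕ} (c : Fin (n + 1) → Y) : Prop :=
  ∀ i : Fin n, ∃ U ∈ 𝒰, c i.castSucc ∈ U ∧ c i.succ ∈ U

/-- Regularity of an overlay structure `S` of `p`: no loop in the overlay cover `p(S)`
has one lift that is an `S`-loop and another lift (an `S`-chain) that is not a loop. -/
def IsRegularStructure {X Y : Type*} [TopologicalSpace X] [TopologicalSpace Y]
    (p : X → Y) (S : Set (Set X)) : Prop :=
  ∀ (n : ℕ) (d e : Fin (n + 1) → X), IsChainIn S d → IsChainIn S e →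
    (∀ i, p (d i) = p (e i)) → d 0 = d (Fin.last n) → e 0 = e (Fin.last n)

set_option linter.unusedVariables false

namespace OverlayAux

variable {X Y : Type*} [TopologicalSpace X] [TopologicalSpace Y] [Group Y]
  [IsTopologicalGroup Y]

/-- Membership in the overlay cover determined by `T`. -/
def OMem (p : X → Y) (T : Set (Set X)) (V : Set Y) : Prop := ∃ W ∈ T, V = p '' W

/-- One lifting step: `x` and `x'` lie in a common member of `T` and `p x' = y'`. -/
def OStep (p : X → Y) (T : Set (Set X)) (x : X) (y' : Y) (x' : X) : Prop :=
  ∃ W ∈ T, x ∈ W ∧ x' ∈ W ∧ p x' = y'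

/-- A chain of length `n` w.r.t. the overlay cover of `T`. -/
def OChain (p : X → Y) (T : Set (Set X)) (n : ℕ) (c : ℕ → Y) : Prop :=
  ∀ i < n, ∃ V, OMem p T V ∧ c i ∈ V ∧ c (i+1) ∈ V

/-- `e` is a lift (of length `n`) of the chain `c`. -/
def OLift (p : X → Y) (T : Set (Set X)) (n : ℕ) (c : ℕ → Y) (e : ℕ → X) : Prop :=
  ∀ i < n, OStep p T (e i) (c (i+1)) (e (i+1))

/-- All the facts we need about the overlay structure `T`, bundled. -/
structure Good (p : X → Y) (T : Set (Set X)) : Prop where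
  hcX : Continuous p
  injW : ∀ W ∈ T, Set.InjOn p W
  injStar : ∀ x : X, Set.InjOn p (st x T)
  openW : ∀ W ∈ T, IsOpen W
  covX : ∀ x : X, ∃ W ∈ T, x ∈ W
  sheet : ∀ W ∈ T, ∀ x : X, p x ∈ p '' W → ∃ W' ∈ T, x ∈ W' ∧ p '' W' = p '' W
  openV : ∀ V, OMem p T V → IsOpen V
  transV : ∀ V, OMem p T V → ∀ g : Y, OMem p T ((fun z => z * g) '' V)
  homeoW : ∀ W ∈ T, RestrictsToHomeo p W (p '' W)

variable {p : X → Y} {T : Set (Set X)}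

theorem ostep_proj {x y' x'} (h : OStep p T x y' x') : p x' = y' := by
  obtain ⟨W, _, _, _, h⟩ := h; exact h

theorem ostep_symm {x y' x'} (h : OStep p T x y' x') : OStep p T x' (p x) x := by
  obtain ⟨W, hW, hx, hx', _⟩ := h; exact ⟨W, hW, hx', hx, rfl⟩

theorem mem_st {x x' : X} {W : Set X} (hW : W ∈ T) (hx : x ∈ W) (hx' : x' ∈ W) :
    x' ∈ st x T := ⟨W, ⟨hW, hx⟩, hx'⟩

theorem ostep_unique (H : Good p T) {x y' a b} (ha : OStep p T x y' a)
    (hb : OStep p T x y' b) : a = b := by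
  obtain ⟨W₁, hW₁, hx₁, ha₁, hpa⟩ := ha
  obtain ⟨W₂, hW₂, hx₂, hb₂, hpb⟩ := hb
  exact H.injStar x (mem_st hW₁ hx₁ ha₁) (mem_st hW₂ hx₂ hb₂) (hpa.trans hpb.symm)

theorem ostep_exists (H : Good p T) {x y'} {V : Set Y} (hV : OMem p T V)
    (hx : p x ∈ V) (hy' : y' ∈ V) : ∃ x', OStep p T x y' x' := by
  obtain ⟨W, hW, rfl⟩ := hV
  obtain ⟨W', hW', hxW', himg⟩ := H.sheet W hW x hx
  rw [← himg] at hy'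
  obtain ⟨x', hx'W', hpx'⟩ := hy'
  exact ⟨x', W', hW', hxW', hx'W', hpx'⟩

/-- If `x ∈ W ∈ T` and `y' ∈ p '' W`, then the step from `x` to `y'` lands in `W`. -/
theorem ostep_mem (H : Good p T) {x y' x'} (h : OStep p T x y' x')
    {W : Set X} (hW : W ∈ T) (hx : x ∈ W) (hy' : y' ∈ p '' W) : x' ∈ W := by
  obtain ⟨x'', hx''W, hpx''⟩ := hy'
  have : OStep p T x y' x'' := ⟨W, hW, hx, hx''W, hpx''⟩
  rwa [ostep_unique H h this]

theorem olift_proj {n c e} (h : OLift p T n c e) (h0 : p (e 0) = c 0) :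
    ∀ i ≤ n, p (e i) = c i := by
  intro i hi
  induction i with
  | zero => exact h0
  | succ k ih => exact ostep_proj (h k (by omega))

theorem olift_mono {n m c e} (h : OLift p T n c e) (hm : m ≤ n) : OLift p T m c e :=
  fun i hi => h i (by omega)

theorem ochain_mono {n m c} (h : OChain p T n c) (hm : m ≤ n) : OChain p T m c :=
  fun i hi => h i (by omega)

theorem ochain_congr {n c c'} (hcc : ∀ i ≤ n, c i = c' i) (h : OChain p T n c) :
    OChain p T n c' := by
  intro i hi
  obtain ⟨V, hV, h1, h2⟩ := h i hi
  rw [hcc i (by omega)] at h1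
  rw [hcc (i+1) (by omega)] at h2
  exact ⟨V, hV, h1, h2⟩

theorem olift_congr {n c c' e} (hcc : ∀ i, 1 ≤ i → i ≤ n → c i = c' i)
    (h : OLift p T n c e) : OLift p T n c' e := by
  intro i hi
  rw [← hcc (i+1) (by omega) (by omega)]
  exact h i hi

theorem olift_exists (H : Good p T) {n c} (hch : OChain p T n c) {x : X}
    (hx : p x = c 0) : ∃ e, e 0 = x ∧ OLift p T n c e := by
  induction n with
  | zero => exact ⟨fun _ => x, rfl, fun i hi => absurd hi (by omega)⟩
  | succ m ih =>
    obtain ⟨e, he0, he⟩ := ih (ochain_mono hch (by omega))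
    obtain ⟨V, hV, h1, h2⟩ := hch m (by omega)
    have hpem : p (e m) = c m := olift_proj he (he0 ▸ hx) m le_rfl
    obtain ⟨x', hx'⟩ := ostep_exists H hV (hpem ▸ h1) h2
    refine ⟨fun i => if i = m + 1 then x' else e i, by simp [he0], ?_⟩
    intro i hi
    rcases Nat.lt_or_ge i m with hlt | hge
    · simpa [Nat.ne_of_lt (by omega : i < m + 1), Nat.ne_of_lt (by omega : i + 1 < m + 1),
        Nat.ne_of_lt (by omega : i < m)]
        using he i hlt
    · have hi' : i = m := by omega
      subst hi'
      simp only [if_neg (by omega : ¬ i = i + 1), if_pos rfl]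
      exact hx'

theorem olift_unique (H : Good p T) {n c e f} (he : OLift p T n c e)
    (hf : OLift p T n c f) (h0 : e 0 = f 0) : ∀ i ≤ n, e i = f i := by
  intro i hi
  induction i with
  | zero => exact h0
  | succ k ih =>
    have hk := ih (by omega)
    have := hf k (by omega)
    rw [← hk] at this
    exact ostep_unique H (he k (by omega)) this

/-- Concatenation of two sequences, switching at index `n`. -/
def ocat {α : Type*} (n : ℕ) (f g : ℕ → α) : ℕ → α := fun i => if i ≤ n then f i else g (i - n)

/-- Reversal of (the first `n+1` entries of) a sequence. -/
def orev {α : Type*} (n : ℕ) (f : ℕ → α) : ℕ → α := fun i => f (n - i)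

theorem ocat_left {α : Type*} {n : ℕ} {f g : ℕ → α} {i : ℕ} (h : i ≤ n) :
    ocat n f g i = f i := if_pos h

theorem ocat_right {α : Type*} {n : ℕ} {f g : ℕ → α} (hj : f n = g 0) (j : ℕ) :
    ocat n f g (n + j) = g j := by
  rcases Nat.eq_zero_or_pos j with rfl | hj'
  · simpa [ocat] using hj
  · simp only [ocat, if_neg (by omega : ¬ n + j ≤ n)]
    congr 1
    omega

theorem ochain_cat {n m c d} (hc : OChain p T n c) (hd : OChain p T m d)
    (hjoin : c n = d 0) : OChain p T (n + m) (ocat n c d) := by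
  intro i hi
  rcases Nat.lt_or_ge i n with hlt | hge
  · obtain ⟨V, hV, h1, h2⟩ := hc i hlt
    exact ⟨V, hV, by rwa [ocat_left (by omega)], by rwa [ocat_left (by omega)]⟩
  · obtain ⟨j, rfl⟩ : ∃ j, i = n + j := ⟨i - n, by omega⟩
    obtain ⟨V, hV, h1, h2⟩ := hd j (by omega)
    refine ⟨V, hV, by rwa [ocat_right hjoin], ?_⟩
    have : n + j + 1 = n + (j + 1) := by omega
    rw [this, ocat_right hjoin]
    exact h2

theorem olift_cat {n m c d e f} (he : OLift p T n c e) (hf : OLift p T m d f)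
    (hjoin : e n = f 0) (hcd : c n = d 0) :
    OLift p T (n + m) (ocat n c d) (ocat n e f) := by
  intro i hi
  rcases Nat.lt_or_ge i n with hlt | hge
  · show OStep p T (ocat n e f i) (ocat n c d (i + 1)) (ocat n e f (i + 1))
    rw [ocat_left (by omega : i ≤ n), ocat_left (by omega : i + 1 ≤ n),
      ocat_left (by omega : i + 1 ≤ n)]
    exact he i hlt
  · obtain ⟨j, rfl⟩ : ∃ j, i = n + j := ⟨i - n, by omega⟩
    show OStep p T (ocat n e f (n + j)) (ocat n c d (n + j + 1)) (ocat n e f (n + j + 1))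
    have h1 : n + j + 1 = n + (j + 1) := by omega
    rw [ocat_right hjoin, h1, ocat_right hjoin, ocat_right hcd]
    exact hf j (by omega)

theorem ochain_rev {n c} (hc : OChain p T n c) : OChain p T n (orev n c) := by
  intro i hi
  obtain ⟨V, hV, h1, h2⟩ := hc (n - i - 1) (by omega)
  refine ⟨V, hV, ?_, ?_⟩
  · show c (n - i) ∈ V
    have : n - i = n - i - 1 + 1 := by omega
    rwa [this]
  · show c (n - (i + 1)) ∈ V
    have : n - (i + 1) = n - i - 1 := by omega
    rwa [this]

theorem olift_rev {n c e} (he : OLift p T n c e) (h0 : p (e 0) = c 0) :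
    OLift p T n (orev n c) (orev n e) := by
  intro i hi
  have hstep := he (n - i - 1) (by omega)
  have heq : n - i - 1 + 1 = n - i := by omega
  rw [heq] at hstep
  have hsymm := ostep_symm hstep
  have hproj : p (e (n - i - 1)) = c (n - i - 1) := olift_proj he h0 _ (by omega)
  show OStep p T (e (n - i)) (c (n - (i + 1))) (e (n - (i + 1)))
  have h2 : n - (i + 1) = n - i - 1 := by omega
  rw [h2, ← hproj]
  exact hsymm

theorem ochain_mul {n c} (hc : OChain p T n c) (g : Y) (H : Good p T) :
    OChain p T n (fun i => c i * g) := by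
  intro i hi
  obtain ⟨V, hV, h1, h2⟩ := hc i hi
  exact ⟨(fun z => z * g) '' V, H.transV V hV g, ⟨c i, h1, rfl⟩, ⟨c (i+1), h2, rfl⟩⟩

open Classical in
/-- The endpoint of the (unique) lift of `c` (of length `n`) starting at `x`. -/
noncomputable def liftEnd (H : Good p T) (n : ℕ) (c : ℕ → Y) (x : X) : X :=
  if h : OChain p T n c ∧ p x = c 0 then (olift_exists H h.1 h.2).choose n else x

theorem liftEnd_spec (H : Good p T) {n c x} (hch : OChain p T n c) (hx : p x = c 0) :
    ∃ e, e 0 = x ∧ OLift p T n c e ∧ e n = liftEnd H n c x := by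
  have h : OChain p T n c ∧ p x = c 0 := ⟨hch, hx⟩
  obtain ⟨h1, h2⟩ := (olift_exists H h.1 h.2).choose_spec
  exact ⟨_, h1, h2, by rw [liftEnd, dif_pos h]⟩

theorem liftEnd_eq (H : Good p T) {n c x e} (hch : OChain p T n c) (hx : p x = c 0)
    (he0 : e 0 = x) (he : OLift p T n c e) : liftEnd H n c x = e n := by
  obtain ⟨f, hf0, hf, hfn⟩ := liftEnd_spec H hch hx
  rw [← hfn]
  exact olift_unique H hf he (by rw [hf0, he0]) n le_rfl

theorem liftEnd_proj (H : Good p T) {n c x} (hch : OChain p T n c) (hx : p x = c 0) :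
    p (liftEnd H n c x) = c n := by
  obtain ⟨f, hf0, hf, hfn⟩ := liftEnd_spec H hch hx
  rw [← hfn]
  exact olift_proj hf (hf0 ▸ hx) n le_rfl

theorem liftEnd_zero (H : Good p T) (c : ℕ → Y) (x : X) : liftEnd H 0 c x = x := by
  rw [liftEnd]
  split
  · next h => exact (olift_exists H h.1 h.2).choose_spec.1
  · rfl

theorem liftEnd_step (H : Good p T) {N c x} (hch : OChain p T (N + 1) c)
    (hx : p x = c 0) :
    OStep p T (liftEnd H N c x) (c (N + 1)) (liftEnd H (N + 1) c x) := by
  obtain ⟨e, he0, he, heN⟩ := liftEnd_spec H hch hx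
  have h1 : liftEnd H N c x = e N :=
    liftEnd_eq H (ochain_mono hch (by omega)) hx he0 (olift_mono he (by omega))
  rw [h1, ← heN]
  exact he N (by omega)

theorem liftEnd_continuous {Z : Type*} [TopologicalSpace Z] (H : Good p T) (N : ℕ)
    (h : Z → ℕ → Y) (hhc : ∀ i, Continuous fun z => h z i)
    (ℓ : Z → X) (hl : Continuous ℓ) (hp : ∀ z, p (ℓ z) = h z 0)
    (hch : ∀ z, OChain p T N (h z)) :
    Continuous fun z => liftEnd H N (h z) (ℓ z) := by
  induction N with
  | zero => simpa [liftEnd_zero] using hl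
  | succ N ih =>
    have hchN : ∀ z, OChain p T N (h z) := fun z => ochain_mono (hch z) (by omega)
    have hPhi : Continuous fun z => liftEnd H N (h z) (ℓ z) := ih hchN
    rw [continuous_iff_continuousAt]
    intro z₀
    obtain ⟨V, hV, hN1, hN2⟩ := hch z₀ N (by omega)
    have hVmem : OMem p T V := hV
    obtain ⟨W, hW, hVW⟩ := hV
    have hproj : ∀ z, p (liftEnd H N (h z) (ℓ z)) = h z N :=
      fun z => liftEnd_proj H (hchN z) (hp z)
    obtain ⟨W', hW', hmem, himg⟩ :=
      H.sheet W hW (liftEnd H N (h z₀) (ℓ z₀)) (by rw [hproj z₀, ← hVW]; exact hN1)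
    have hV'V : p '' W' = V := himg.trans hVW.symm
    obtain ⟨eW, heW⟩ := H.homeoW W' hW'
    set Nset : Set Z := {z | liftEnd H N (h z) (ℓ z) ∈ W' ∧ h z N ∈ V ∧ h z (N+1) ∈ V}
      with hNsetdef
    have hNopen : IsOpen Nset := by
      have h1 : IsOpen ((fun z => liftEnd H N (h z) (ℓ z)) ⁻¹' W') :=
        (H.openW W' hW').preimage hPhi
      have h2 : IsOpen ((fun z => h z N) ⁻¹' V) := (H.openV V hVmem).preimage (hhc N)
      have h3 : IsOpen ((fun z => h z (N+1)) ⁻¹' V) := (H.openV V hVmem).preimage (hhc (N+1))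
      exact (h1.inter (h2.inter h3))
    have hz₀ : z₀ ∈ Nset := ⟨hmem, hN1, hN2⟩
    have hmem' : ∀ z ∈ Nset, h z (N+1) ∈ p '' W' := fun z hz => hV'V ▸ hz.2.2
    have hloc : ∀ z (hz : z ∈ Nset),
        liftEnd H (N+1) (h z) (ℓ z) = ((eW.symm ⟨h z (N+1), hmem' z hz⟩ : W') : X) := by
      intro z hz
      set q : W' := eW.symm ⟨h z (N+1), hmem' z hz⟩ with hq
      have hpq : p (q : X) = h z (N+1) := by
        have := heW q
        rw [hq] at this ⊢
        rw [← this, Homeomorph.apply_symm_apply]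
      have hstep1 : OStep p T (liftEnd H N (h z) (ℓ z)) (h z (N+1)) (q : X) :=
        ⟨W', hW', hz.1, q.2, hpq⟩
      have hstep2 : OStep p T (liftEnd H N (h z) (ℓ z)) (h z (N+1))
          (liftEnd H (N+1) (h z) (ℓ z)) := liftEnd_step H (hch z) (hp z)
      exact ostep_unique H hstep2 hstep1
    have hco : ContinuousOn (fun z => liftEnd H (N+1) (h z) (ℓ z)) Nset := by
      rw [continuousOn_iff_continuous_restrict]
      have heqf : Nset.domRestrict (fun z => liftEnd H (N+1) (h z) (ℓ z))
          = fun z : Nset => ((eW.symm ⟨h z.1 (N+1), hmem' z.1 z.2⟩ : W') : X) :=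
        funext fun z => hloc z.1 z.2
      rw [heqf]
      exact continuous_subtype_val.comp (eW.symm.continuous.comp
        (Continuous.subtype_mk ((hhc (N+1)).comp continuous_subtype_val) _))
    exact hco.continuousAt (hNopen.mem_nhds hz₀)

/-- `a` is reachable from `x₀` by a lift of a chain starting at `1`. -/
def Reach (p : X → Y) (T : Set (Set X)) (x₀ a : X) : Prop :=
  ∃ n c e, OChain p T n c ∧ c 0 = 1 ∧ e 0 = x₀ ∧ OLift p T n c e ∧ e n = a

theorem reach_refl (x₀ : X) : Reach p T x₀ x₀ :=
  ⟨0, fun _ => 1, fun _ => x₀, fun i hi => absurd hi (by omega), rfl, rfl,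
    fun i hi => absurd hi (by omega), rfl⟩

theorem reach_extend {x₀ : X} (hx₀ : p x₀ = 1) {a a' : X} (h : Reach p T x₀ a)
    {W : Set X} (hW : W ∈ T) (ha : a ∈ W) (ha' : a' ∈ W) : Reach p T x₀ a' := by
  obtain ⟨n, c, e, hc, hc0, he0, he, hen⟩ := h
  have hpe : ∀ i ≤ n, p (e i) = c i := olift_proj he (by rw [he0, hx₀, hc0])
  refine ⟨n + 1, fun i => if i ≤ n then c i else p a',
    fun i => if i ≤ n then e i else a', ?_, by simp [hc0], by simp [he0],
    ?_, by show (if n + 1 ≤ n then e (n + 1) else a') = a'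
           rw [if_neg (by omega : ¬ n + 1 ≤ n)]⟩
  · intro i hi
    rcases Nat.lt_or_ge i n with hlt | hge
    · obtain ⟨V, hV, h1, h2⟩ := hc i hlt
      refine ⟨V, hV, ?_, ?_⟩
      · show (if i ≤ n then c i else p a') ∈ V
        rwa [if_pos (by omega : i ≤ n)]
      · show (if i + 1 ≤ n then c (i + 1) else p a') ∈ V
        rwa [if_pos (by omega : i + 1 ≤ n)]
    · have hin : i = n := by omega
      refine ⟨p '' W, ⟨W, hW, rfl⟩, ?_, ?_⟩
      · show (if i ≤ n then c i else p a') ∈ p '' W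
        rw [if_pos (by omega : i ≤ n), hin, ← hpe n le_rfl, hen]
        exact ⟨a, ha, rfl⟩
      · show (if i + 1 ≤ n then c (i + 1) else p a') ∈ p '' W
        rw [if_neg (by omega : ¬ i + 1 ≤ n)]
        exact ⟨a', ha', rfl⟩
  · intro i hi
    show OStep p T (if i ≤ n then e i else a') (if i + 1 ≤ n then c (i + 1) else p a')
      (if i + 1 ≤ n then e (i + 1) else a')
    rcases Nat.lt_or_ge i n with hlt | hge
    · rw [if_pos (by omega : i ≤ n), if_pos (by omega : i + 1 ≤ n),
        if_pos (by omega : i + 1 ≤ n)]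
      exact he i hlt
    · have hin : i = n := by omega
      rw [if_pos (by omega : i ≤ n), if_neg (by omega : ¬ i + 1 ≤ n),
        if_neg (by omega : ¬ i + 1 ≤ n), hin, hen]
      exact ⟨W, hW, ha, ha', rfl⟩

theorem reach_all [ConnectedSpace X] (H : Good p T) {x₀ : X} (hx₀ : p x₀ = 1) :
    ∀ a : X, Reach p T x₀ a := by
  set R := {a : X | Reach p T x₀ a} with hR
  have hopen : IsOpen R := by
    rw [isOpen_iff_forall_mem_open]
    intro a haR
    obtain ⟨W, hW, haW⟩ := H.covX a
    exact ⟨W, fun a' ha' => reach_extend hx₀ haR hW haW ha', H.openW W hW, haW⟩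
  have hclosed : IsClosed R := by
    rw [← isOpen_compl_iff, isOpen_iff_forall_mem_open]
    intro a haR
    obtain ⟨W, hW, haW⟩ := H.covX a
    refine ⟨W, fun a' ha' (haR' : Reach p T x₀ a') => ?_, H.openW W hW, haW⟩
    exact haR (reach_extend hx₀ haR' hW ha' haW)
  have : R = univ := IsClopen.eq_univ ⟨hclosed, hopen⟩ ⟨x₀, reach_refl x₀⟩
  intro a
  rw [← Set.mem_setOf_eq (p := fun a => Reach p T x₀ a), ← hR, this]
  trivial

/-- Key lemma: lifts of (right translates of) chain loops at `1` are loops. -/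
theorem loop_lift [ConnectedSpace X] (H : Good p T) {x₀ : X} (hx₀ : p x₀ = 1)
    {N : ℕ} {γ : ℕ → Y} (hγ : OChain p T N γ) (h0 : γ 0 = 1) (hN : γ N = 1)
    (hloop : liftEnd H N γ x₀ = x₀) :
    ∀ b : X, liftEnd H N (fun i => γ i * p b) b = b := by
  set φ := fun b : X => liftEnd H N (fun i => γ i * p b) b with hφ
  have hchains : ∀ b : X, OChain p T N (fun i => γ i * p b) :=
    fun b => ochain_mul hγ (p b) H
  have hpb : ∀ b : X, p b = γ 0 * p b := fun b => by rw [h0, one_mul]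
  have hφc : Continuous φ :=
    liftEnd_continuous H N (fun b i => γ i * p b)
      (fun i => continuous_const.mul H.hcX) id continuous_id hpb hchains
  have hφp : ∀ b, p (φ b) = p b := by
    intro b
    rw [hφ]
    simp only
    rw [liftEnd_proj H (hchains b) (hpb b), hN, one_mul]
  set G := {b : X | φ b = b} with hG
  have hx₀G : x₀ ∈ G := by
    obtain ⟨e, he0, he, hen⟩ := liftEnd_spec H hγ (by rw [h0, hx₀])
    have he' : OLift p T N (fun i => γ i * p x₀) e :=
      olift_congr (fun i _ _ => by rw [hx₀, mul_one]) he
    show φ x₀ = x₀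
    rw [hφ]
    simp only
    rw [liftEnd_eq H (hchains x₀) (hpb x₀) he0 he', hen, hloop]
  have hopen : IsOpen G := by
    rw [isOpen_iff_forall_mem_open]
    intro b₀ hb₀
    obtain ⟨A, hA, hbA⟩ := H.covX b₀
    refine ⟨φ ⁻¹' A ∩ A, ?_, ((H.openW A hA).preimage hφc).inter (H.openW A hA), ?_⟩
    · intro b ⟨h1, h2⟩
      exact H.injW A hA h1 h2 (hφp b)
    · exact ⟨by rw [Set.mem_preimage, hb₀]; exact hbA, hbA⟩
  have hclosed : IsClosed G := by
    rw [← isOpen_compl_iff, isOpen_iff_forall_mem_open]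
    intro b₀ hb₀
    obtain ⟨A, hA, hbA⟩ := H.covX b₀
    obtain ⟨W, hW, hφW⟩ := H.covX (φ b₀)
    refine ⟨φ ⁻¹' W ∩ A, ?_, ((H.openW W hW).preimage hφc).inter (H.openW A hA), ?_⟩
    · intro b ⟨h1, h2⟩ (hbG : φ b = b)
      refine hb₀ ?_
      show φ b₀ = b₀
      have hb₀st : b₀ ∈ st b T := mem_st hA h2 hbA
      have hbW : b ∈ W := by
        have h1' : φ b ∈ W := h1
        rwa [hbG] at h1'
      have hφb₀st : φ b₀ ∈ st b T := mem_st hW hbW hφW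
      exact H.injStar b hφb₀st hb₀st (by rw [hφp b₀])
    · exact ⟨hφW, hbA⟩
  have huniv : G = univ := IsClopen.eq_univ ⟨hclosed, hopen⟩ ⟨x₀, hx₀G⟩
  intro b
  have : b ∈ G := huniv ▸ Set.mem_univ b
  exact this

/-- The multiplication relation: `m` is the result of multiplying `a` and `b`
(relative to basepoint `x₀`). -/
def MulR (p : X → Y) (T : Set (Set X)) (x₀ a b m : X) : Prop :=
  ∃ n c, OChain p T n c ∧ c 0 = 1 ∧
    (∃ e, e 0 = x₀ ∧ OLift p T n c e ∧ e n = a) ∧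
    (∃ f, f 0 = b ∧ OLift p T n (fun i => c i * p b) f ∧ f n = m)

theorem mulR_proj {x₀ a b m : X} (hx₀ : p x₀ = 1) (h : MulR p T x₀ a b m) :
    p m = p a * p b := by
  obtain ⟨n, c, hc, hc0, ⟨e, he0, he, hen⟩, ⟨f, hf0, hf, hfn⟩⟩ := h
  have hpe : p (e n) = c n := olift_proj he (by rw [he0, hx₀, hc0]) n le_rfl
  have hpf : p (f n) = c n * p b :=
    olift_proj hf (by rw [hf0, hc0, one_mul]) n le_rfl
  rw [← hfn, hpf, ← hen, hpe]

theorem mulR_exists [ConnectedSpace X] (H : Good p T) {x₀ : X} (hx₀ : p x₀ = 1)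
    (a b : X) : ∃ m, MulR p T x₀ a b m := by
  obtain ⟨n, c, e, hc, hc0, he0, he, hen⟩ := reach_all H hx₀ a
  obtain ⟨f, hf0, hf⟩ := olift_exists H (ochain_mul hc (p b) H)
    (x := b) (by rw [hc0, one_mul])
  exact ⟨f n, n, c, hc, hc0, ⟨e, he0, he, hen⟩, ⟨f, hf0, hf, rfl⟩⟩

theorem mulR_unique [ConnectedSpace X] (H : Good p T) {x₀ : X} (hx₀ : p x₀ = 1)
    {a b m m' : X} (h : MulR p T x₀ a b m) (h' : MulR p T x₀ a b m') : m = m' := by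
  obtain ⟨n, c, hc, hc0, ⟨e, he0, he, hen⟩, ⟨f, hf0, hf, hfn⟩⟩ := h
  obtain ⟨n', c', hc', hc0', ⟨e', he0', he', hen'⟩, ⟨f', hf0', hf', hfn'⟩⟩ := h'
  have hpe : ∀ i ≤ n, p (e i) = c i := olift_proj he (by rw [he0, hx₀, hc0])
  have hpe' : ∀ i ≤ n', p (e' i) = c' i := olift_proj he' (by rw [he0', hx₀, hc0'])
  have hcn : c n = p a := by rw [← hpe n le_rfl, hen]
  have hcn' : c' n' = p a := by rw [← hpe' n' le_rfl, hen']
  have hpf : ∀ i ≤ n, p (f i) = c i * p b := olift_proj hf (by rw [hf0, hc0, one_mul])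
  have hpm : p m = p a * p b := by rw [← hfn, hpf n le_rfl, hcn]
  -- the loop γ and its lift E at x₀
  have hjoinc : c n = orev n' c' 0 := by
    show c n = c' (n' - 0)
    rw [Nat.sub_zero, hcn, hcn']
  have hγ : OChain p T (n + n') (ocat n c (orev n' c')) :=
    ochain_cat hc (ochain_rev hc') hjoinc
  have hγ0 : ocat n c (orev n' c') 0 = 1 := by rw [ocat_left (Nat.zero_le n), hc0]
  have hγN : ocat n c (orev n' c') (n + n') = 1 := by
    rw [ocat_right hjoinc]
    show c' (n' - n') = 1
    rw [Nat.sub_self, hc0']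
  have hjoine : e n = orev n' e' 0 := by
    show e n = e' (n' - 0)
    rw [Nat.sub_zero, hen, hen']
  have hE : OLift p T (n + n') (ocat n c (orev n' c')) (ocat n e (orev n' e')) :=
    olift_cat he (olift_rev he' (by rw [he0', hx₀, hc0'])) hjoine hjoinc
  have hE0 : ocat n e (orev n' e') 0 = x₀ := by rw [ocat_left (Nat.zero_le n), he0]
  have hEN : ocat n e (orev n' e') (n + n') = x₀ := by
    rw [ocat_right hjoine]
    show e' (n' - n') = x₀
    rw [Nat.sub_self, he0']
  have hloopend : liftEnd H (n + n') (ocat n c (orev n' c')) x₀ = x₀ := by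
    rw [liftEnd_eq H hγ (by rw [hγ0, hx₀]) hE0 hE, hEN]
  -- the lift of the translated loop at b
  obtain ⟨g, hg0, hg⟩ := olift_exists H (ochain_mul (ochain_rev hc') (p b) H) (x := m)
    (by show p m = orev n' c' 0 * p b; rw [← hjoinc, hcn, hpm])
  have hjoinfg : f n = g 0 := by rw [hfn, hg0]
  have hjoincb : (fun i => c i * p b) n = (fun i => orev n' c' i * p b) 0 := by
    simp only
    rw [hjoinc]
  have hF : OLift p T (n + n')
      (ocat n (fun i => c i * p b) (fun i => orev n' c' i * p b))
      (ocat n f g) := olift_cat hf hg hjoinfg hjoincb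
  have hcateq : (fun i => ocat n c (orev n' c') i * p b)
      = ocat n (fun i => c i * p b) (fun i => orev n' c' i * p b) := by
    funext i
    simp only [ocat]
    split <;> rfl
  have hF' : OLift p T (n + n') (fun i => ocat n c (orev n' c') i * p b) (ocat n f g) := by
    rw [hcateq]
    exact hF
  have hF0 : ocat n f g 0 = b := by rw [ocat_left (Nat.zero_le n), hf0]
  have hFN : ocat n f g (n + n') = b := by
    have hch' : OChain p T (n + n') (fun i => ocat n c (orev n' c') i * p b) :=
      ochain_mul hγ (p b) H
    have hend := loop_lift H hx₀ hγ hγ0 hγN hloopend b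
    rw [← liftEnd_eq H hch' (by rw [hγ0, one_mul]) hF0 hF']
    exact hend
  have hgn' : g n' = b := by
    rw [← ocat_right hjoinfg n']
    exact hFN
  -- reverse `g` and compare with `f'`
  have hrevg : OLift p T n' (orev n' (fun i => orev n' c' i * p b)) (orev n' g) :=
    olift_rev hg (by rw [hg0]; show p m = orev n' c' 0 * p b; rw [← hjoinc, hcn, hpm])
  have hrevg' : OLift p T n' (fun i => c' i * p b) (orev n' g) := by
    refine olift_congr (fun i h1 h2 => ?_) hrevg
    show c' (n' - (n' - i)) * p b = c' i * p b
    rw [show n' - (n' - i) = i by omega]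
  have hstart : orev n' g 0 = f' 0 := by
    show g (n' - 0) = f' 0
    rw [Nat.sub_zero, hgn', hf0']
  have := olift_unique H hrevg' hf' hstart n' le_rfl
  show m = m'
  rw [← hfn']
  rw [← this]
  show m = g (n' - n')
  rw [Nat.sub_self, hg0]

theorem ocat_mulf {α : Type*} [Mul α] {n : ℕ} (c d : ℕ → α) (g : α) :
    (fun i => ocat n c d i * g) = ocat n (fun i => c i * g) (fun i => d i * g) := by
  funext i
  simp only [ocat]
  split <;> rfl

/-- Extending a chain and its lift by one step inside a member `W` of `T`. -/
theorem olift_snoc {n c e} (hc : OChain p T n c) (he : OLift p T n c e)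
    (hproj0 : p (e 0) = c 0) {W : Set X} (hW : W ∈ T) (hend : e n ∈ W)
    {a' : X} (ha' : a' ∈ W) :
    OChain p T (n + 1) (fun i => if i ≤ n then c i else p a') ∧
      OLift p T (n + 1) (fun i => if i ≤ n then c i else p a')
        (fun i => if i ≤ n then e i else a') := by
  have hpe : ∀ i ≤ n, p (e i) = c i := olift_proj he hproj0
  constructor
  · intro i hi
    rcases Nat.lt_or_ge i n with hlt | hge
    · obtain ⟨V, hV, h1, h2⟩ := hc i hlt
      refine ⟨V, hV, ?_, ?_⟩
      · show (if i ≤ n then c i else p a') ∈ V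
        rwa [if_pos (by omega : i ≤ n)]
      · show (if i + 1 ≤ n then c (i + 1) else p a') ∈ V
        rwa [if_pos (by omega : i + 1 ≤ n)]
    · have hin : i = n := by omega
      refine ⟨p '' W, ⟨W, hW, rfl⟩, ?_, ?_⟩
      · show (if i ≤ n then c i else p a') ∈ p '' W
        rw [if_pos (by omega : i ≤ n), hin]
        exact ⟨e n, hend, hpe n le_rfl⟩
      · show (if i + 1 ≤ n then c (i + 1) else p a') ∈ p '' W
        rw [if_neg (by omega : ¬ i + 1 ≤ n)]
        exact ⟨a', ha', rfl⟩
  · intro i hi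
    show OStep p T (if i ≤ n then e i else a') (if i + 1 ≤ n then c (i + 1) else p a')
      (if i + 1 ≤ n then e (i + 1) else a')
    rcases Nat.lt_or_ge i n with hlt | hge
    · rw [if_pos (by omega : i ≤ n), if_pos (by omega : i + 1 ≤ n),
        if_pos (by omega : i + 1 ≤ n)]
      exact he i hlt
    · have hin : i = n := by omega
      rw [if_pos (by omega : i ≤ n), if_neg (by omega : ¬ i + 1 ≤ n),
        if_neg (by omega : ¬ i + 1 ≤ n), hin]
      exact ⟨W, hW, hend, ha', rfl⟩

theorem mulR_id_left {x₀ : X} (b : X) : MulR p T x₀ x₀ b b :=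
  ⟨0, fun _ => 1, fun i hi => absurd hi (by omega), rfl,
    ⟨fun _ => x₀, rfl, fun i hi => absurd hi (by omega), rfl⟩,
    ⟨fun _ => b, rfl, fun i hi => absurd hi (by omega), rfl⟩⟩

theorem mulR_id_right [ConnectedSpace X] (H : Good p T) {x₀ : X} (hx₀ : p x₀ = 1)
    (a : X) : MulR p T x₀ a x₀ a := by
  obtain ⟨n, c, e, hcch, hc0, he0, he, hen⟩ := reach_all H hx₀ a
  refine ⟨n, c, hcch, hc0, ⟨e, he0, he, hen⟩, ⟨e, he0, ?_, hen⟩⟩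
  exact olift_congr (fun i _ _ => by rw [hx₀, mul_one]) he

theorem mulR_assoc [ConnectedSpace X] (H : Good p T) {x₀ : X} (hx₀ : p x₀ = 1)
    {a b c ab bc : X} (h1 : MulR p T x₀ a b ab) (h2 : MulR p T x₀ b c bc) :
    ∃ m, MulR p T x₀ ab c m ∧ MulR p T x₀ a bc m := by
  have hpab : p ab = p a * p b := mulR_proj hx₀ h1
  have hpbc : p bc = p b * p c := mulR_proj hx₀ h2
  obtain ⟨n₁, γ, hγ, hγ0, ⟨e₁, he₁0, he₁, he₁n⟩, ⟨f₁, hf₁0, hf₁, hf₁n⟩⟩ := h1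
  obtain ⟨n₂, δ, hδ, hδ0, ⟨e₂, he₂0, he₂, he₂n⟩, ⟨f₂, hf₂0, hf₂, hf₂n⟩⟩ := h2
  have hδn : δ n₂ = p b := by
    rw [← olift_proj he₂ (by rw [he₂0, hx₀, hδ0]) n₂ le_rfl, he₂n]
  -- lift of γ translated by p b * p c, starting at bc
  obtain ⟨g, hg0, hg⟩ := olift_exists H (ochain_mul hγ (p b * p c) H) (x := bc)
    (by rw [hpbc, hγ0, one_mul])
  refine ⟨g n₁, ?_, ?_⟩
  · -- MulR ab c (g n₁) via concatenated chain
    have hjoinc : δ n₂ = (fun i => γ i * p b) 0 := by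
      show δ n₂ = γ 0 * p b
      rw [hδn, hγ0, one_mul]
    have hjoine : e₂ n₂ = f₁ 0 := by rw [he₂n, hf₁0]
    have hε : OChain p T (n₂ + n₁) (ocat n₂ δ (fun i => γ i * p b)) :=
      ochain_cat hδ (ochain_mul hγ (p b) H) hjoinc
    have hε0 : ocat n₂ δ (fun i => γ i * p b) 0 = 1 := by
      rw [ocat_left (Nat.zero_le n₂), hδ0]
    have hE : OLift p T (n₂ + n₁) (ocat n₂ δ (fun i => γ i * p b)) (ocat n₂ e₂ f₁) :=
      olift_cat he₂ hf₁ hjoine hjoinc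
    have hg' : OLift p T n₁ (fun i => γ i * p b * p c) g :=
      olift_congr (fun i _ _ => by rw [mul_assoc]) hg
    have hjoincb : (fun i => δ i * p c) n₂ = (fun i => γ i * p b * p c) 0 := by
      show δ n₂ * p c = γ 0 * p b * p c
      rw [hδn, hγ0, one_mul]
    have hjoinfg : f₂ n₂ = g 0 := by rw [hf₂n, hg0]
    have hF : OLift p T (n₂ + n₁)
        (ocat n₂ (fun i => δ i * p c) (fun i => γ i * p b * p c)) (ocat n₂ f₂ g) :=
      olift_cat hf₂ hg' hjoinfg hjoincb
    have hF' : OLift p T (n₂ + n₁)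
        (fun i => ocat n₂ δ (fun j => γ j * p b) i * p c) (ocat n₂ f₂ g) := by
      rw [ocat_mulf]
      exact hF
    refine ⟨n₂ + n₁, ocat n₂ δ (fun i => γ i * p b), hε, hε0,
      ⟨ocat n₂ e₂ f₁, ?_, hE, ?_⟩, ⟨ocat n₂ f₂ g, ?_, hF', ?_⟩⟩
    · rw [ocat_left (Nat.zero_le n₂), he₂0]
    · rw [ocat_right hjoine, hf₁n]
    · rw [ocat_left (Nat.zero_le n₂), hf₂0]
    · rw [ocat_right hjoinfg]
  · -- MulR a bc (g n₁)
    have hgbc : OLift p T n₁ (fun i => γ i * p bc) g := by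
      have : (fun i => γ i * p bc) = fun i => γ i * (p b * p c) := by rw [hpbc]
      rw [this]
      exact hg
    exact ⟨n₁, γ, hγ, hγ0, ⟨e₁, he₁0, he₁, he₁n⟩, ⟨g, hg0, hgbc, rfl⟩⟩

theorem mulR_inv [ConnectedSpace X] (H : Good p T) {x₀ : X} (hx₀ : p x₀ = 1)
    (a : X) : ∃ z, MulR p T x₀ z a x₀ ∧ MulR p T x₀ a z x₀ := by
  obtain ⟨n, c, e, hcch, hc0, he0, he, hen⟩ := reach_all H hx₀ a
  have hpe : ∀ i ≤ n, p (e i) = c i := olift_proj he (by rw [he0, hx₀, hc0])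
  have hcn : c n = p a := by rw [← hpe n le_rfl, hen]
  have hηch : OChain p T n (fun i => orev n c i * (p a)⁻¹) :=
    ochain_mul (ochain_rev hcch) ((p a)⁻¹) H
  have hη0 : orev n c 0 * (p a)⁻¹ = 1 := by
    show c (n - 0) * (p a)⁻¹ = 1
    rw [Nat.sub_zero, hcn, mul_inv_cancel]
  obtain ⟨h, hh0, hh⟩ := olift_exists H hηch (x := x₀) (by rw [hx₀, hη0])
  have hph : ∀ i ≤ n, p (h i) = orev n c i * (p a)⁻¹ :=
    olift_proj hh (by rw [hh0, hx₀, hη0])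
  refine ⟨h n, ?_, ?_⟩
  · -- MulR (h n) a x₀
    have hrev : OLift p T n (orev n c) (orev n e) := olift_rev he (by rw [he0, hx₀, hc0])
    have hrev' : OLift p T n (fun i => (orev n c i * (p a)⁻¹) * p a) (orev n e) :=
      olift_congr (fun i _ _ => by rw [inv_mul_cancel_right]) hrev
    refine ⟨n, fun i => orev n c i * (p a)⁻¹, hηch, hη0,
      ⟨h, hh0, hh, rfl⟩, ⟨orev n e, ?_, hrev', ?_⟩⟩
    · show e (n - 0) = a
      rw [Nat.sub_zero, hen]
    · show e (n - n) = x₀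
      rw [Nat.sub_self, he0]
  · -- MulR a (h n) x₀
    have hpz : p (h n) = (p a)⁻¹ := by
      rw [hph n le_rfl]
      show c (n - n) * (p a)⁻¹ = (p a)⁻¹
      rw [Nat.sub_self, hc0, one_mul]
    have hrevh : OLift p T n (orev n (fun i => orev n c i * (p a)⁻¹)) (orev n h) :=
      olift_rev hh (by rw [hh0, hx₀, hη0])
    have hrevh' : OLift p T n (fun i => c i * p (h n)) (orev n h) := by
      refine olift_congr (fun i h1 h2 => ?_) hrevh
      show c (n - (n - i)) * (p a)⁻¹ = c i * p (h n)
      rw [show n - (n - i) = i by omega, hpz]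
    refine ⟨n, c, hcch, hc0, ⟨e, he0, he, hen⟩, ⟨orev n h, ?_, hrevh', ?_⟩⟩
    · show h (n - 0) = h n
      rw [Nat.sub_zero]
    · show h (n - n) = x₀
      rw [Nat.sub_self, hh0]

theorem mulR_continuous [ConnectedSpace X] (H : Good p T) {x₀ : X} (hx₀ : p x₀ = 1)
    (μ : X → X → X) (hμ : ∀ a b, MulR p T x₀ a b (μ a b)) :
    Continuous fun q : X × X => μ q.1 q.2 := by
  rw [continuous_iff_continuousAt]
  rintro ⟨a₀, b₀⟩
  obtain ⟨A, hA, ha₀⟩ := H.covX a₀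
  obtain ⟨n, δ, e, hδ, hδ0, he0, he, hen⟩ := reach_all H hx₀ a₀
  have hpe0 : p (e 0) = δ 0 := by rw [he0, hx₀, hδ0]
  have hδn : δ n = p a₀ := by rw [← olift_proj he hpe0 n le_rfl, hen]
  set Zs : Set (X × X) := A ×ˢ (univ : Set X) with hZs
  have hc1 : Continuous fun z : ↥Zs => p (z : X × X).1 :=
    H.hcX.comp (continuous_fst.comp continuous_subtype_val)
  have hc2 : Continuous fun z : ↥Zs => p (z : X × X).2 :=
    H.hcX.comp (continuous_snd.comp continuous_subtype_val)
  -- the snoc chain, lifted data, for each z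
  have hsnoc : ∀ z : ↥Zs,
      OChain p T (n + 1) (fun i => if i ≤ n then δ i else p (z : X × X).1) ∧
      OLift p T (n + 1) (fun i => if i ≤ n then δ i else p (z : X × X).1)
        (fun i => if i ≤ n then e i else (z : X × X).1) :=
    fun z => olift_snoc hδ he hpe0 hA (hen ▸ ha₀) z.2.1
  have hch : ∀ z : ↥Zs, OChain p T (n + 1)
      (fun i => (if i ≤ n then δ i else p (z : X × X).1) * p (z : X × X).2) :=
    fun z => ochain_mul (hsnoc z).1 _ H
  have hhc : ∀ i, Continuous fun z : ↥Zs =>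
      (if i ≤ n then δ i else p (z : X × X).1) * p (z : X × X).2 := by
    intro i
    by_cases hi : i ≤ n
    · simp only [if_pos hi]
      exact continuous_const.mul hc2
    · simp only [if_neg hi]
      exact hc1.mul hc2
  have hp0 : ∀ z : ↥Zs, p ((z : X × X).2)
      = (if 0 ≤ n then δ 0 else p (z : X × X).1) * p (z : X × X).2 := by
    intro z
    rw [if_pos (Nat.zero_le n), hδ0, one_mul]
  have hΦc : Continuous fun z : ↥Zs => liftEnd H (n + 1)
      (fun i => (if i ≤ n then δ i else p (z : X × X).1) * p (z : X × X).2)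
      ((z : X × X).2) :=
    liftEnd_continuous H (n + 1)
      (fun (z : ↥Zs) (i : ℕ) => (if i ≤ n then δ i else p (z : X × X).1) * p (z : X × X).2)
      hhc (fun (z : ↥Zs) => (z : X × X).2) (continuous_snd.comp continuous_subtype_val)
      hp0 hch
  have hkey : ∀ z : ↥Zs, μ (z : X × X).1 (z : X × X).2 = liftEnd H (n + 1)
      (fun i => (if i ≤ n then δ i else p (z : X × X).1) * p (z : X × X).2)
      ((z : X × X).2) := by
    intro z
    obtain ⟨f, hf0, hf, hfn⟩ := liftEnd_spec H (hch z) (hp0 z)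
    refine mulR_unique H hx₀ (hμ _ _) ⟨n + 1,
      fun i => if i ≤ n then δ i else p (z : X × X).1, (hsnoc z).1, ?_,
      ⟨fun i => if i ≤ n then e i else (z : X × X).1, ?_, (hsnoc z).2, ?_⟩,
      ⟨f, hf0, hf, hfn⟩⟩
    · show (if 0 ≤ n then δ 0 else _) = 1
      rw [if_pos (Nat.zero_le n), hδ0]
    · show (if 0 ≤ n then e 0 else _) = x₀
      rw [if_pos (Nat.zero_le n), he0]
    · show (if n + 1 ≤ n then e (n + 1) else (z : X × X).1) = (z : X × X).1
      rw [if_neg (by omega : ¬ n + 1 ≤ n)]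
  have hcon : ContinuousOn (fun q : X × X => μ q.1 q.2) Zs := by
    rw [continuousOn_iff_continuous_restrict]
    have : Zs.domRestrict (fun q : X × X => μ q.1 q.2) = fun z : ↥Zs => liftEnd H (n + 1)
        (fun i => (if i ≤ n then δ i else p (z : X × X).1) * p (z : X × X).2)
        ((z : X × X).2) := funext fun z => hkey z
    rw [this]
    exact hΦc
  exact hcon.continuousAt (((H.openW A hA).prod isOpen_univ).mem_nhds ⟨ha₀, trivial⟩)

theorem invR_continuous [ConnectedSpace X] (H : Good p T) {x₀ : X} (hx₀ : p x₀ = 1)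
    (ι : X → X) (hι : ∀ a z, MulR p T x₀ z a x₀ → z = ι a) : Continuous ι := by
  rw [continuous_iff_continuousAt]
  intro a₀
  obtain ⟨A, hA, ha₀⟩ := H.covX a₀
  obtain ⟨n, δ, e, hδ, hδ0, he0, he, hen⟩ := reach_all H hx₀ a₀
  have hpe0 : p (e 0) = δ 0 := by rw [he0, hx₀, hδ0]
  have hsnoc : ∀ z : ↥A,
      OChain p T (n + 1) (fun i => if i ≤ n then δ i else p (z : X)) ∧
      OLift p T (n + 1) (fun i => if i ≤ n then δ i else p (z : X))
        (fun i => if i ≤ n then e i else (z : X)) :=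
    fun z => olift_snoc hδ he hpe0 hA (hen ▸ ha₀) z.2
  -- the reversed translated chain, for each z ∈ A
  set hfam : ↥A → ℕ → Y := fun z i =>
    orev (n + 1) (fun j => if j ≤ n then δ j else p (z : X)) i * (p (z : X))⁻¹
    with hfamdef
  have hch : ∀ z : ↥A, OChain p T (n + 1) (hfam z) :=
    fun z => ochain_mul (ochain_rev (hsnoc z).1) _ H
  have hfam0 : ∀ z : ↥A, hfam z 0 = 1 := by
    intro z
    show (if n + 1 - 0 ≤ n then δ (n + 1 - 0) else p (z : X)) * (p (z : X))⁻¹ = 1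
    rw [Nat.sub_zero, if_neg (by omega : ¬ n + 1 ≤ n), mul_inv_cancel]
  have hhc : ∀ i, Continuous fun z : ↥A => hfam z i := by
    intro i
    have hcz : Continuous fun z : ↥A => p (z : X) := H.hcX.comp continuous_subtype_val
    by_cases hi : n + 1 - i ≤ n
    · show Continuous fun z : ↥A =>
        (if n + 1 - i ≤ n then δ (n + 1 - i) else p (z : X)) * (p (z : X))⁻¹
      simp only [if_pos hi]
      exact continuous_const.mul hcz.inv
    · show Continuous fun z : ↥A =>
        (if n + 1 - i ≤ n then δ (n + 1 - i) else p (z : X)) * (p (z : X))⁻¹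
      simp only [if_neg hi]
      exact hcz.mul hcz.inv
  have hp0 : ∀ z : ↥A, p x₀ = hfam z 0 := fun z => by rw [hfam0 z, hx₀]
  have hψc : Continuous fun z : ↥A => liftEnd H (n + 1) (hfam z) x₀ :=
    liftEnd_continuous H (n + 1) hfam hhc (fun _ => x₀) continuous_const hp0 hch
  have hkey : ∀ z : ↥A, ι (z : X) = liftEnd H (n + 1) (hfam z) x₀ := by
    intro z
    obtain ⟨h, hh0, hh, hhn⟩ := liftEnd_spec H (hch z) (hp0 z)
    refine (hι _ _ ⟨n + 1, hfam z, hch z, hfam0 z, ⟨h, hh0, hh, hhn⟩, ?_⟩).symm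
    -- second lift: reverse of the snoc lift, from z to x₀
    have hE := (hsnoc z).2
    have hpE0 : p ((fun i => if i ≤ n then e i else (z : X)) 0)
        = (fun i => if i ≤ n then δ i else p (z : X)) 0 := by
      show p (if 0 ≤ n then e 0 else (z : X)) = (if 0 ≤ n then δ 0 else p (z : X))
      rw [if_pos (Nat.zero_le n), if_pos (Nat.zero_le n), he0, hx₀, hδ0]
    have hrev : OLift p T (n + 1)
        (orev (n + 1) (fun i => if i ≤ n then δ i else p (z : X)))
        (orev (n + 1) (fun i => if i ≤ n then e i else (z : X))) :=
      olift_rev hE hpE0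
    have hrev' : OLift p T (n + 1) (fun i => hfam z i * p (z : X))
        (orev (n + 1) (fun i => if i ≤ n then e i else (z : X))) :=
      olift_congr (fun i _ _ => by
        show orev (n + 1) (fun j => if j ≤ n then δ j else p (z : X)) i
          = orev (n + 1) (fun j => if j ≤ n then δ j else p (z : X)) i
            * (p (z : X))⁻¹ * p (z : X)
        rw [inv_mul_cancel_right]) hrev
    refine ⟨orev (n + 1) (fun i => if i ≤ n then e i else (z : X)), ?_, hrev', ?_⟩
    · show (if n + 1 - 0 ≤ n then e (n + 1 - 0) else (z : X)) = (z : X)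
      rw [Nat.sub_zero, if_neg (by omega : ¬ n + 1 ≤ n)]
    · show (if n + 1 - (n + 1) ≤ n then e (n + 1 - (n + 1)) else (z : X)) = x₀
      rw [Nat.sub_self, if_pos (Nat.zero_le n), he0]
  have hcon : ContinuousOn ι A := by
    rw [continuousOn_iff_continuous_restrict]
    have : A.domRestrict ι = fun z : ↥A => liftEnd H (n + 1) (hfam z) x₀ :=
      funext fun z => hkey z
    rw [this]
    exact hψc
  exact hcon.continuousAt ((H.openW A hA).mem_nhds ha₀)

end OverlayAux

open OverlayAux

/-- Let `p : X → Y` be a regular overlay with `X` connected and `Y` a topological group.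
If there is an open neighborhood `U` of the identity of `Y` such that the family
`{U·y : y ∈ Y}` is an overlay cover of `Y` for `p`, then there exists a topological group
structure on `X` making `p` a continuous homomorphism. -/
theorem group_structure_on_domain_of_regular_overlay
    {X Y : Type*} [TopologicalSpace X] [TopologicalSpace Y]
    [Group Y] [IsTopologicalGroup Y] [ConnectedSpace X]
    (p : X → Y) (hc : Continuous p)
    (hreg : ∃ S : Set (Set X), IsOverlayStructure p S ∧ IsRegularStructure p S)
    (U : Set Y) (hU : IsOpen U) (h1U : (1 : Y) ∈ U)
    (hcover : ∃ T : Set (Set X), IsOverlayStructure p T ∧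
      {V : Set Y | ∃ W ∈ T, V = p '' W} = {V : Set Y | ∃ y : Y, V = U * {y}}) :
    ∃ gX : Group X,
      (letI := gX;
        IsTopologicalGroup X ∧ ∀ a b : X, p (a * b) = p a * p b) := by
  classical
  clear hreg
  obtain ⟨T, hT, hTcov⟩ := hcover
  -- injectivity of p on slices
  have hinj : ∀ V : Set X, IsSlice p V → Set.InjOn p V := by
    intro V hV
    obtain ⟨-, D, hVD, -, -, -, hhom⟩ := hV
    obtain ⟨e, he⟩ := hhom V hVD
    intro x hx y hy hxy
    have hxy' : e ⟨x, hx⟩ = e ⟨y, hy⟩ :=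
      Subtype.ext (by rw [he ⟨x, hx⟩, he ⟨y, hy⟩]; exact hxy)
    exact congrArg Subtype.val (e.injective hxy')
  have hcovV : ∀ V, OMem p T V → ∃ y : Y, V = U * {y} := by
    intro V hV
    have hmem : V ∈ {V : Set Y | ∃ W ∈ T, V = p '' W} := hV
    rw [hTcov] at hmem
    exact hmem
  have hVmem : ∀ y : Y, OMem p T (U * {y}) := by
    intro y
    have hmem : U * {y} ∈ {V : Set Y | ∃ y : Y, V = U * {y}} := ⟨y, rfl⟩
    rw [← hTcov] at hmem
    exact hmem
  have H : Good p T :=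
    { hcX := hc
      injW := fun W hW => hinj W (hT.1.1 W hW)
      injStar := fun x => hinj _ (hT.2 x)
      openW := fun W hW => (hT.1.1 W hW).1
      covX := fun x => Set.mem_sUnion.mp (hT.1.2.1.symm ▸ Set.mem_univ x)
      sheet := by
        intro W hW x hx
        obtain ⟨D, hDT, -, hDu, hDim⟩ := hT.1.2.2 W hW
        have hxD : x ∈ ⋃₀ D := by rw [hDu]; exact hx
        obtain ⟨W', hW'D, hxW'⟩ := hxD
        exact ⟨W', hDT hW'D, hxW', hDim W' hW'D⟩
      openV := by
        intro V hV
        obtain ⟨y, rfl⟩ := hcovV V hV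
        rw [Set.mul_singleton]
        exact (Homeomorph.mulRight y).isOpenMap U hU
      transV := by
        intro V hV g
        obtain ⟨y, rfl⟩ := hcovV V hV
        have heq : (fun z => z * g) '' (U * {y}) = U * {y * g} := by
          rw [Set.mul_singleton, Set.mul_singleton, Set.image_image]
          simp only [mul_assoc]
        rw [heq]
        exact hVmem (y * g)
      homeoW := by
        intro W hW
        obtain ⟨-, D, hWD, -, -, -, hhom⟩ := hT.1.1 W hW
        exact hhom W hWD }
  -- the basepoint over 1
  have hU1 : U * {(1 : Y)} ∈ {V : Set Y | ∃ W ∈ T, V = p '' W} := by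
    rw [hTcov]; exact ⟨1, rfl⟩
  obtain ⟨W₀, hW₀, hW₀eq⟩ := hU1
  have h1mem : (1 : Y) ∈ p '' W₀ := by
    rw [← hW₀eq]
    simpa using Set.mul_mem_mul h1U (Set.mem_singleton (1 : Y))
  obtain ⟨x₀, hx₀W, hx₀⟩ := h1mem
  -- the group operations
  choose μ hμ using fun a b => mulR_exists H hx₀ a b
  have huniq : ∀ {a b m}, MulR p T x₀ a b m → μ a b = m :=
    fun {a b m} h => mulR_unique H hx₀ (hμ a b) h
  choose ι hι1 hι2 using fun a => mulR_inv H hx₀ a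
  letI instMul : Mul X := ⟨μ⟩
  letI instOne : One X := ⟨x₀⟩
  letI instInv : Inv X := ⟨ι⟩
  have hassoc : ∀ a b c : X, a * b * c = a * (b * c) := by
    intro a b c
    obtain ⟨m, h1, h2⟩ := mulR_assoc H hx₀ (hμ a b) (hμ b c)
    show μ (μ a b) c = μ a (μ b c)
    rw [huniq h1, huniq h2]
  have honemul : ∀ a : X, (1 : X) * a = a := fun a => huniq (mulR_id_left a)
  have hinvmul : ∀ a : X, a⁻¹ * a = 1 := fun a => huniq (hι1 a)
  letI gX : Group X := Group.ofLeftAxioms hassoc honemul hinvmul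
  refine ⟨gX, ?_, ?_⟩
  · have hcm : Continuous fun q : X × X => q.1 * q.2 := mulR_continuous H hx₀ μ hμ
    have huz : ∀ a z, MulR p T x₀ z a x₀ → z = ι a := by
      intro a z hz
      have h1 : μ z a = (1 : X) := huniq hz
      have h1' : z * a = (1 : X) := h1
      calc z = z * 1 := (mul_one z).symm
        _ = z * (a * a⁻¹) := by rw [mul_inv_cancel]
        _ = z * a * a⁻¹ := (mul_assoc z a a⁻¹).symm
        _ = 1 * a⁻¹ := by rw [h1']
        _ = a⁻¹ := one_mul _
    have hci : Continuous fun a : X => a⁻¹ := invR_continuous H hx₀ ι huz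
    haveI : ContinuousMul X := ⟨hcm⟩
    haveI : ContinuousInv X := ⟨hci⟩
    exact IsTopologicalGroup.mk
  · intro a b
    exact mulR_proj hx₀ (hμ a b)
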